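/- Let p ≡ 2 (mod 3) be prime, and let G₂ = ⟨g, H₂⟩ ≤ GL₂(ℤ/p²ℤ) with g = [[1,−3],[1,−2]] and H₂ = {h(a,b)} as above. The map Z sending h(a,b) to (p(a−2b), p(a−b)) ∈ (ℤ/p²ℤ)², extended to G₂ by Z_g = (0,0) via the cocycle relation, defines a 1-cocycle Z : G₂ → (ℤ/p²ℤ)² which satisfies the local conditions (for every γ ∈ G₂ there is m_γ with Z_γ = γ(m_γ) − m_γ) but is not a coboundary. Hence H¹_loc(G₂, (ℤ/p²ℤ)²) ≠ 0. -/
import Mathlib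
/-- The matrix `g = [[1, −3], [1, −2]]` over `ℤ/p²ℤ`. -/
def gmat (p : ℕ) : Matrix (Fin 2) (Fin 2) (ZMod (p^2)) := !![1, -3; 1, -2]

/-- The matrix `h(a,b)` over `ℤ/p²ℤ`. -/
def hmat (p : ℕ) (a b : ZMod (p^2)) : Matrix (Fin 2) (Fin 2) (ZMod (p^2)) :=
  !![1 + (p : ZMod (p^2)) * (a - 2*b), 3 * (p : ZMod (p^2)) * (b - a);
     -((p : ZMod (p^2)) * b), 1 - (p : ZMod (p^2)) * (a - 2*b)]

/-- The subgroup `G₂ = ⟨g, H₂⟩` of `GL₂(ℤ/p²ℤ)`. -/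
def G2 (p : ℕ) : Subgroup (Matrix.GeneralLinearGroup (Fin 2) (ZMod (p^2))) :=
  Subgroup.closure {u | (u : Matrix (Fin 2) (Fin 2) (ZMod (p^2))) = gmat p ∨
    ∃ a b : ZMod (p^2), (u : Matrix (Fin 2) (Fin 2) (ZMod (p^2))) = hmat p a b}

section Aux

set_option linter.unusedTactic false
set_option linter.unreachableTactic false
set_option linter.unnecessarySeqFocus false

variable (p : ℕ)

lemma sc_pp0 : (p : ZMod (p^2)) * (p : ZMod (p^2)) = 0 := by
  have : ((p^2 : ℕ) : ZMod (p^2)) = 0 := ZMod.natCast_self _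
  push_cast at this
  linear_combination this

lemma sc_hmat_mul (a b c d : ZMod (p^2)) :
    hmat p a b * hmat p c d = hmat p (a+c) (b+d) := by
  have h := sc_pp0 p
  ext i j
  fin_cases i <;> fin_cases j <;>
    simp [hmat, Matrix.mul_fin_two]
  · linear_combination (a*c + a*d - 2*b*c + b*d) * h
  · linear_combination (-3*a*d + 3*b*c) * h
  · linear_combination (a*d - b*c) * h
  · linear_combination (a*c - 2*a*d + b*c + b*d) * h

lemma sc_hmat_zero : hmat p 0 0 = 1 := by
  rw [show (1 : Matrix (Fin 2) (Fin 2) (ZMod (p^2))) = !![1,0;0,1] from Matrix.one_fin_two]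
  simp [hmat]

lemma sc_gmat_sq : gmat p ^ 2 = !![-2, 3; -1, 1] := by
  simp only [pow_succ, pow_zero, one_mul, gmat, Matrix.mul_fin_two]
  norm_num

lemma sc_gmat_pow3 : gmat p ^ 3 = 1 := by
  rw [show (1 : Matrix (Fin 2) (Fin 2) (ZMod (p^2))) = !![1,0;0,1] from Matrix.one_fin_two]
  simp only [pow_succ, pow_zero, one_mul, gmat, Matrix.mul_fin_two]
  norm_num

lemma sc_g_comm (a b : ZMod (p^2)) :
    gmat p * hmat p a b = hmat p (-b) (a-b) * gmat p := by
  ext i j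
  fin_cases i <;> fin_cases j <;>
    simp [hmat, gmat, Matrix.mul_fin_two] <;> ring

lemma sc_g2_comm (a b : ZMod (p^2)) :
    gmat p ^ 2 * hmat p a b = hmat p (b-a) (-a) * gmat p ^ 2 := by
  rw [sc_gmat_sq]
  ext i j
  fin_cases i <;> fin_cases j <;>
    simp [hmat, Matrix.mul_fin_two] <;> ring

lemma sc_hmat_mulVec (a b u v : ZMod (p^2)) :
    Matrix.mulVec (hmat p a b) ![(p : ZMod (p^2)) * u, (p : ZMod (p^2)) * v]
      = ![(p : ZMod (p^2)) * u, (p : ZMod (p^2)) * v] := by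
  have h := sc_pp0 p
  funext i
  fin_cases i <;>
    simp [hmat, Matrix.mulVec, dotProduct, Fin.sum_univ_succ]
  · linear_combination ((a - 2*b)*u + 3*(b-a)*v) * h
  · linear_combination (-b*u - (a-2*b)*v) * h

lemma sc_gmat_mulVec_p (u v : ZMod (p^2)) :
    Matrix.mulVec (gmat p) ![(p : ZMod (p^2)) * u, (p : ZMod (p^2)) * v]
      = ![(p : ZMod (p^2)) * (u - 3*v), (p : ZMod (p^2)) * (u - 2*v)] := by
  funext i
  fin_cases i <;>
    simp [gmat, Matrix.mulVec, dotProduct, Fin.sum_univ_succ] <;> ring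

lemma sc_g2_mulVec_p (u v : ZMod (p^2)) :
    Matrix.mulVec (gmat p ^ 2) ![(p : ZMod (p^2)) * u, (p : ZMod (p^2)) * v]
      = ![(p : ZMod (p^2)) * (-2*u + 3*v), (p : ZMod (p^2)) * (-u + v)] := by
  rw [sc_gmat_sq]
  funext i
  fin_cases i <;>
    simp [Matrix.mulVec, dotProduct, Fin.sum_univ_succ] <;> ring

lemma sc_gpow_norm (k : ℕ) : gmat p ^ k = gmat p ^ (k % 3) := by
  conv_lhs => rw [← Nat.div_add_mod k 3]
  rw [pow_add, pow_mul, sc_gmat_pow3, one_pow, one_mul]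

lemma sc_gpow_comm (k : ℕ) (c d : ZMod (p^2)) :
    ∃ u v : ZMod (p^2), gmat p ^ k * hmat p c d = hmat p u v * gmat p ^ k := by
  induction k generalizing c d with
  | zero => exact ⟨c, d, by simp⟩
  | succ n ih =>
    obtain ⟨u, v, huv⟩ := ih (-d) (c - d)
    refine ⟨u, v, ?_⟩
    calc gmat p ^ (n+1) * hmat p c d
        = gmat p ^ n * (gmat p * hmat p c d) := by
          simp only [pow_succ, mul_assoc]
      _ = gmat p ^ n * hmat p (-d) (c-d) * gmat p := by
          rw [sc_g_comm, mul_assoc]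
      _ = hmat p u v * gmat p ^ (n+1) := by
          rw [huv]; simp only [pow_succ, mul_assoc]

lemma sc_comm_and_act (k : ℕ) (hk : k < 3) (c d : ZMod (p^2)) :
    ∃ u v : ZMod (p^2), gmat p ^ k * hmat p c d = hmat p u v * gmat p ^ k ∧
      Matrix.mulVec (gmat p ^ k) ![(p : ZMod (p^2)) * (c - 2*d), (p : ZMod (p^2)) * (c - d)]
        = ![(p : ZMod (p^2)) * (u - 2*v), (p : ZMod (p^2)) * (u - v)] := by
  interval_cases k
  · exact ⟨c, d, by simp, by simp⟩
  · refine ⟨-d, c - d, by simpa using sc_g_comm p c d, ?_⟩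
    rw [pow_one, sc_gmat_mulVec_p]
    funext i
    fin_cases i <;> simp <;> ring
  · refine ⟨d - c, -c, sc_g2_comm p c d, ?_⟩
    rw [sc_g2_mulVec_p]
    funext i
    fin_cases i <;> simp <;> ring

/-- Every element of `G2` has the normal form `hmat a b * gmat ^ k` with `k < 3`. -/
lemma sc_rep (x : Matrix.GeneralLinearGroup (Fin 2) (ZMod (p^2))) (hx : x ∈ G2 p) :
    ∃ a b : ZMod (p^2), ∃ k : ℕ, k < 3 ∧
      (x : Matrix (Fin 2) (Fin 2) (ZMod (p^2))) = hmat p a b * gmat p ^ k := by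
  have key : ∃ a b : ZMod (p^2), ∃ k : ℕ,
      (x : Matrix (Fin 2) (Fin 2) (ZMod (p^2))) = hmat p a b * gmat p ^ k := by
    refine Subgroup.closure_induction ?_ ?_ ?_ ?_ hx
    · rintro y (hy | ⟨a, b, hy⟩)
      · exact ⟨0, 0, 1, by rw [hy, sc_hmat_zero, one_mul, pow_one]⟩
      · exact ⟨a, b, 0, by rw [hy, pow_zero, mul_one]⟩
    · exact ⟨0, 0, 0, by rw [sc_hmat_zero, pow_zero, one_mul, Units.val_one]⟩
    · rintro y z - - ⟨a, b, k, hy⟩ ⟨c, d, j, hz⟩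
      obtain ⟨u, v, huv⟩ := sc_gpow_comm p k c d
      refine ⟨a + u, b + v, k + j, ?_⟩
      rw [Units.val_mul, hy, hz, ← sc_hmat_mul, pow_add]
      calc hmat p a b * gmat p ^ k * (hmat p c d * gmat p ^ j)
          = hmat p a b * (gmat p ^ k * hmat p c d) * gmat p ^ j := by
            simp only [mul_assoc]
        _ = hmat p a b * hmat p u v * (gmat p ^ k * gmat p ^ j) := by
            rw [huv]; simp only [mul_assoc]
    · rintro y - ⟨a, b, k, hy⟩
      obtain ⟨u, v, huv⟩ := sc_gpow_comm p (2 * k) (-a) (-b)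
      refine ⟨u, v, 2 * k, ?_⟩
      have h1 : (y : Matrix (Fin 2) (Fin 2) (ZMod (p^2))) *
          (hmat p u v * gmat p ^ (2 * k)) = 1 := by
        rw [← huv, hy]
        have h3k : gmat p ^ k * gmat p ^ (2*k) = 1 := by
          rw [← pow_add]
          have : k + 2 * k = 3 * k := by ring
          rw [this, pow_mul, sc_gmat_pow3, one_pow]
        calc hmat p a b * gmat p ^ k * (gmat p ^ (2*k) * hmat p (-a) (-b))
            = hmat p a b * (gmat p ^ k * gmat p ^ (2*k)) * hmat p (-a) (-b) := by
              simp only [mul_assoc]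
          _ = hmat p a b * hmat p (-a) (-b) := by simp only [h3k, mul_one]
          _ = 1 := by rw [sc_hmat_mul]; simpa using sc_hmat_zero p
      have hyy : ((y⁻¹ : Matrix.GeneralLinearGroup (Fin 2) (ZMod (p^2))) :
          Matrix (Fin 2) (Fin 2) (ZMod (p^2))) * (y : Matrix (Fin 2) (Fin 2) (ZMod (p^2)))
          = 1 := by rw [← Units.val_mul, inv_mul_cancel, Units.val_one]
      calc ((y⁻¹ : Matrix.GeneralLinearGroup (Fin 2) (ZMod (p^2))) :
          Matrix (Fin 2) (Fin 2) (ZMod (p^2)))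
          = ↑y⁻¹ * ((y : Matrix (Fin 2) (Fin 2) (ZMod (p^2))) *
            (hmat p u v * gmat p ^ (2 * k))) := by rw [h1, mul_one]
        _ = (↑y⁻¹ * (y : Matrix (Fin 2) (Fin 2) (ZMod (p^2)))) *
            (hmat p u v * gmat p ^ (2 * k)) := by rw [mul_assoc]
        _ = hmat p u v * gmat p ^ (2 * k) := by rw [hyy, one_mul]
  obtain ⟨a, b, k, hk⟩ := key
  exact ⟨a, b, k % 3, Nat.mod_lt _ (by norm_num), by rw [hk, sc_gpow_norm]⟩

/-- reduction mod p -/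
noncomputable def scphi : ZMod (p^2) →+* ZMod p :=
  ZMod.castHom (dvd_pow_self p two_ne_zero) (ZMod p)

lemma sc_phi_p : scphi p (p : ZMod (p^2)) = 0 := by
  rw [map_natCast, ZMod.natCast_self]

lemma sc_map_hmat (a b : ZMod (p^2)) :
    (scphi p).mapMatrix (hmat p a b) = 1 := by
  have h0 := sc_phi_p p
  ext i j
  fin_cases i <;> fin_cases j <;>
    simp [hmat, Matrix.one_apply, h0, Matrix.one_fin_two]

lemma sc_map_gmat : (scphi p).mapMatrix (gmat p) = !![1, -3; 1, -2] := by
  ext i j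
  fin_cases i <;> fin_cases j <;> simp [gmat, map_ofNat]

lemma sc_three_ne (hp : p.Prime) (h3 : p % 3 = 2) : (3 : ZMod p) ≠ 0 := by
  haveI : NeZero p := ⟨hp.pos.ne'⟩
  intro h
  have hd : p ∣ 3 := (ZMod.natCast_eq_zero_iff 3 p).mp (by exact_mod_cast h)
  rcases (Nat.prime_dvd_prime_iff_eq hp (by norm_num)).mp hd with rfl
  simp at h3

lemma sc_gbar_pows_inj (hp : p.Prime) (h3 : p % 3 = 2) {k k' : ℕ} (hk : k < 3) (hk' : k' < 3)
    (h : (!![1, -3; 1, -2] : Matrix (Fin 2) (Fin 2) (ZMod p)) ^ k = !![1, -3; 1, -2] ^ k') :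
    k = k' := by
  have h3' := sc_three_ne p hp h3
  have hsq : (!![1, -3; 1, -2] : Matrix (Fin 2) (Fin 2) (ZMod p)) ^ 2 = !![-2, 3; -1, 1] := by
    simp only [pow_succ, pow_zero, one_mul, Matrix.mul_fin_two]; norm_num
  have hone : (1 : Matrix (Fin 2) (Fin 2) (ZMod p)) = !![1, 0; 0, 1] := Matrix.one_fin_two
  interval_cases k <;> interval_cases k' <;>
    simp only [pow_zero, pow_one, hsq, hone] at h <;>
    first
      | rfl
      | (exfalso
         have h01 := Matrix.ext_iff.mpr h 0 1
         have h00 := Matrix.ext_iff.mpr h 0 0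
         simp at h01 h00
         first
           | (apply h3'; linear_combination h01)
           | (apply h3'; linear_combination h00)
           | (apply h3'; linear_combination -h01)
           | (apply h3'; linear_combination -h00)
           | (apply h3'; linear_combination h00 - h01)
           | (apply h3'; linear_combination h01 - h00))

lemma sc_map_pow_gmat (k : ℕ) : (scphi p).mapMatrix (gmat p ^ k) = !![1, -3; 1, -2] ^ k := by
  rw [map_pow, sc_map_gmat]

lemma sc_hmat_inj {a b a' b' : ZMod (p^2)} (h : hmat p a b = hmat p a' b') :
    (p : ZMod (p^2)) * (a - 2*b) = (p : ZMod (p^2)) * (a' - 2*b') ∧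
    (p : ZMod (p^2)) * (a - b) = (p : ZMod (p^2)) * (a' - b') := by
  have h00 := Matrix.ext_iff.mpr h 0 0
  have h10 := Matrix.ext_iff.mpr h 1 0
  simp [hmat] at h00 h10
  constructor
  · linear_combination h00
  · linear_combination h00 + h10

lemma sc_uniq (hp : p.Prime) (h3 : p % 3 = 2) {a b a' b' : ZMod (p^2)} {k k' : ℕ}
    (hk : k < 3) (hk' : k' < 3)
    (h : hmat p a b * gmat p ^ k = hmat p a' b' * gmat p ^ k') :
    (p : ZMod (p^2)) * (a - 2*b) = (p : ZMod (p^2)) * (a' - 2*b') ∧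
    (p : ZMod (p^2)) * (a - b) = (p : ZMod (p^2)) * (a' - b') := by
  have hmap := congrArg (scphi p).mapMatrix h
  rw [map_mul, map_mul, sc_map_hmat, sc_map_hmat, one_mul, one_mul,
    sc_map_pow_gmat, sc_map_pow_gmat] at hmap
  obtain rfl := sc_gbar_pows_inj p hp h3 hk hk' hmap
  have hcan : hmat p a b = hmat p a' b' := by
    have h2 := congrArg (· * gmat p ^ (3 - k)) h
    simp only [mul_assoc, ← pow_add] at h2
    have h33 : k + (3 - k) = 3 := by omega
    rwa [h33, sc_gmat_pow3, mul_one, mul_one] at h2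
  exact sc_hmat_inj p hcan

/-- a² - ab + b² = 0 mod p forces a = b = 0 when p ≡ 2 mod 3. -/
lemma sc_norm_sol (hp : p.Prime) (h3 : p % 3 = 2) {a b : ZMod p}
    (h : a*a - a*b + b*b = 0) : a = 0 ∧ b = 0 := by
  haveI : Fact p.Prime := ⟨hp⟩
  by_cases hb : b = 0
  · subst hb
    simp only [mul_zero, sub_zero, add_zero] at h
    exact ⟨mul_self_eq_zero.mp (by linear_combination h), rfl⟩
  · exfalso
    set x : ZMod p := a * b⁻¹ with hxdef
    have hbne : (b : ZMod p) ≠ 0 := hb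
    have hinv : b * b⁻¹ = 1 := mul_inv_cancel₀ hbne
    have hx : x*x - x + 1 = 0 := by
      rw [hxdef]
      linear_combination (b⁻¹*b⁻¹)*h + (a*b⁻¹ - 1 - b*b⁻¹)*hinv
    have hx0 : x ≠ 0 := by
      intro h0; rw [h0] at hx; simp at hx
    have x3 : x^3 = -1 := by linear_combination (x + 1) * hx
    have hm : p - 1 = 3 * (p / 3) + 1 := by omega
    have hfer : x ^ (p - 1) = 1 := ZMod.pow_card_sub_one_eq_one hx0
    rw [hm, pow_add, pow_mul, x3, pow_one] at hfer
    have hx1 : x = (-1 : ZMod p) ^ (p / 3) := by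
      have hsq : ((-1 : ZMod p) ^ (p / 3)) * ((-1 : ZMod p) ^ (p / 3)) = 1 := by
        rw [← pow_add, ← two_mul, pow_mul]; norm_num
      calc x = ((-1 : ZMod p) ^ (p / 3) * (-1 : ZMod p) ^ (p / 3)) * x := by rw [hsq, one_mul]
        _ = (-1 : ZMod p) ^ (p / 3) * ((-1 : ZMod p) ^ (p / 3) * x) := by ring
        _ = (-1 : ZMod p) ^ (p / 3) := by rw [hfer, mul_one]
    rcases Nat.even_or_odd (p / 3) with he | ho
    · rw [he.neg_one_pow] at hx1
      rw [hx1] at hx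
      exact one_ne_zero (α := ZMod p) (by linear_combination hx)
    · rw [ho.neg_one_pow] at hx1
      rw [hx1] at hx
      exact sc_three_ne p hp h3 (by linear_combination hx)

lemma sc_pmul_eq_zero (hp : 0 < p) {u : ZMod (p^2)} (h : scphi p u = 0) :
    (p : ZMod (p^2)) * u = 0 := by
  haveI : NeZero p := ⟨hp.ne'⟩
  haveI : NeZero (p^2) := ⟨pow_ne_zero 2 hp.ne'⟩
  have hval : ((u.val : ℕ) : ZMod p) = 0 := by
    rw [ZMod.natCast_val]
    exact h
  have hdvd : p ∣ u.val := (ZMod.natCast_eq_zero_iff _ p).mp hval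
  obtain ⟨s, hs⟩ := hdvd
  have hu : ((u.val : ℕ) : ZMod (p^2)) = u := by
    rw [ZMod.natCast_val, ZMod.cast_id]
  calc (p : ZMod (p^2)) * u = (p : ZMod (p^2)) * ((u.val : ℕ) : ZMod (p^2)) := by rw [hu]
    _ = (((p * (p * s)) : ℕ) : ZMod (p^2)) := by rw [hs]; push_cast; ring
    _ = (((p^2 * s) : ℕ) : ZMod (p^2)) := by ring_nf
    _ = 0 := by rw [Nat.cast_mul, ZMod.natCast_self, zero_mul]

lemma sc_pmul_eq_p (hp : 0 < p) {u : ZMod (p^2)} (h : scphi p u = 1) :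
    (p : ZMod (p^2)) * u = (p : ZMod (p^2)) := by
  have h0 : scphi p (u - 1) = 0 := by rw [map_sub, h, map_one, sub_self]
  have := sc_pmul_eq_zero p hp h0
  linear_combination this

/-- The lifted inverse of a mod-p unit. -/
noncomputable def sclift (x : ZMod p) : ZMod (p^2) := ((x.val : ℕ) : ZMod (p^2))

lemma sc_phi_lift (hp : 0 < p) (x : ZMod p) : scphi p (sclift p x) = x := by
  haveI : NeZero p := ⟨hp.ne'⟩
  rw [sclift, map_natCast, ZMod.natCast_val, ZMod.cast_id]

end Aux

theorem stmt_17 (p : ℕ) (hp : p.Prime) (h3 : p % 3 = 2) :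
    ∃ Z : G2 p → (Fin 2 → ZMod (p^2)),
      -- `Z` is a 1-cocycle for the natural action of `G₂` on `(ℤ/p²ℤ)²`:
      (∀ x y : G2 p, Z (x * y) =
        Z x + Matrix.mulVec ((x : Matrix.GeneralLinearGroup (Fin 2) (ZMod (p^2))) :
          Matrix (Fin 2) (Fin 2) (ZMod (p^2))) (Z y)) ∧
      -- `Z` vanishes at `g`:
      (∀ x : G2 p, ((x : Matrix.GeneralLinearGroup (Fin 2) (ZMod (p^2))) :
          Matrix (Fin 2) (Fin 2) (ZMod (p^2))) = gmat p → Z x = 0) ∧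
      -- `Z (h(a,b)) = (p(a−2b), p(a−b))`:
      (∀ x : G2 p, ∀ a b : ZMod (p^2),
        ((x : Matrix.GeneralLinearGroup (Fin 2) (ZMod (p^2))) :
          Matrix (Fin 2) (Fin 2) (ZMod (p^2))) = hmat p a b →
        Z x = ![(p : ZMod (p^2)) * (a - 2*b), (p : ZMod (p^2)) * (a - b)]) ∧
      -- `Z` satisfies the local conditions:
      (∀ γ : G2 p, ∃ m : Fin 2 → ZMod (p^2),
        Z γ = Matrix.mulVec ((γ : Matrix.GeneralLinearGroup (Fin 2) (ZMod (p^2))) :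
          Matrix (Fin 2) (Fin 2) (ZMod (p^2))) m - m) ∧
      -- but `Z` is not a coboundary, hence `H¹_loc(G₂, (ℤ/p²ℤ)²) ≠ 0`:
      ¬ ∃ v : Fin 2 → ZMod (p^2), ∀ x : G2 p,
        Z x = Matrix.mulVec ((x : Matrix.GeneralLinearGroup (Fin 2) (ZMod (p^2))) :
          Matrix (Fin 2) (Fin 2) (ZMod (p^2))) v - v := by
  classical
  haveI : Fact p.Prime := ⟨hp⟩
  have hrep : ∀ x : G2 p, ∃ a b : ZMod (p^2), ∃ k : ℕ, k < 3 ∧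
      ((x : Matrix.GeneralLinearGroup (Fin 2) (ZMod (p^2))) :
        Matrix (Fin 2) (Fin 2) (ZMod (p^2))) = hmat p a b * gmat p ^ k :=
    fun x => sc_rep p x x.2
  choose A B K hK heq using hrep
  set R := ZMod (p^2)
  refine ⟨fun x => ![(p : R) * (A x - 2 * B x), (p : R) * (A x - B x)], ?_, ?_, ?_, ?_, ?_⟩
  -- key uniqueness tool
  all_goals
    have key : ∀ (x : G2 p) (a b : R) (k : ℕ), k < 3 →
        ((x : Matrix.GeneralLinearGroup (Fin 2) R) : Matrix (Fin 2) (Fin 2) R)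
          = hmat p a b * gmat p ^ k →
        (p : R) * (A x - 2 * B x) = (p : R) * (a - 2*b) ∧
        (p : R) * (A x - B x) = (p : R) * (a - b) :=
      fun x a b k hk h => sc_uniq p hp h3 (hK x) hk ((heq x).symm.trans h)
  · -- cocycle
    intro x y
    obtain ⟨u, v, hcomm, hact⟩ := sc_comm_and_act p (K x) (hK x) (A y) (B y)
    have hxy : ((↑(x*y) : Matrix.GeneralLinearGroup (Fin 2) R) : Matrix (Fin 2) (Fin 2) R)
        = hmat p (A x + u) (B x + v) * gmat p ^ ((K x + K y) % 3) := by
      have hcoe : ((↑(x*y) : Matrix.GeneralLinearGroup (Fin 2) R) : Matrix (Fin 2) (Fin 2) R)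
          = ((↑x : Matrix.GeneralLinearGroup (Fin 2) R) : Matrix (Fin 2) (Fin 2) R) *
            ((↑y : Matrix.GeneralLinearGroup (Fin 2) R) : Matrix (Fin 2) (Fin 2) R) := rfl
      rw [hcoe, heq x, heq y, ← sc_gpow_norm, pow_add]
      calc hmat p (A x) (B x) * gmat p ^ (K x) * (hmat p (A y) (B y) * gmat p ^ (K y))
          = hmat p (A x) (B x) * (gmat p ^ (K x) * hmat p (A y) (B y)) * gmat p ^ (K y) := by
            simp only [mul_assoc]
        _ = hmat p (A x) (B x) * hmat p u v * (gmat p ^ (K x) * gmat p ^ (K y)) := by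
            rw [hcomm]; simp only [mul_assoc]
        _ = hmat p (A x + u) (B x + v) * (gmat p ^ (K x) * gmat p ^ (K y)) := by
            rw [sc_hmat_mul]
    obtain ⟨e1, e2⟩ := key (x*y) _ _ _ (Nat.mod_lt _ (by norm_num)) hxy
    have hmv : Matrix.mulVec ((↑x : Matrix.GeneralLinearGroup (Fin 2) R) :
        Matrix (Fin 2) (Fin 2) R) ![(p : R) * (A y - 2 * B y), (p : R) * (A y - B y)]
        = ![(p : R) * (u - 2*v), (p : R) * (u - v)] := by
      rw [heq x, ← Matrix.mulVec_mulVec, hact, sc_hmat_mulVec]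
    rw [hmv]
    funext i
    fin_cases i <;> simp <;> [linear_combination e1; linear_combination e2]
  · -- vanishes at g
    intro x hx
    have hx' : ((↑x : Matrix.GeneralLinearGroup (Fin 2) R) : Matrix (Fin 2) (Fin 2) R)
        = hmat p 0 0 * gmat p ^ 1 := by rw [sc_hmat_zero, one_mul, pow_one, hx]
    obtain ⟨e1, e2⟩ := key x 0 0 1 (by norm_num) hx'
    funext i
    fin_cases i <;> simp <;> [linear_combination e1; linear_combination e2]
  · -- value at h(a,b)
    intro x a b hx
    have hx' : ((↑x : Matrix.GeneralLinearGroup (Fin 2) R) : Matrix (Fin 2) (Fin 2) R)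
        = hmat p a b * gmat p ^ 0 := by rw [pow_zero, mul_one, hx]
    obtain ⟨e1, e2⟩ := key x a b 0 (by norm_num) hx'
    funext i
    fin_cases i <;> simp <;> [linear_combination e1; linear_combination e2]
  · -- local conditions
    intro γ
    obtain ⟨k, hk, hrepγ⟩ : ∃ k, k < 3 ∧
        ((↑γ : Matrix.GeneralLinearGroup (Fin 2) R) : Matrix (Fin 2) (Fin 2) R)
          = hmat p (A γ) (B γ) * gmat p ^ k := ⟨K γ, hK γ, heq γ⟩
    set a := A γ
    set b := B γ
    have e3def : scphi p ((3 : R)) = 3 := by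
      simp [map_ofNat]
    interval_cases k
    · -- k = 0
      rw [pow_zero, mul_one] at hrepγ
      by_cases hd : scphi p (a*a - a*b + b*b) = 0
      · -- a ≡ b ≡ 0 mod p : Z γ = 0, take m = 0
        have hd' : scphi p a * scphi p a - scphi p a * scphi p b + scphi p b * scphi p b = 0 := by
          rw [← map_mul, ← map_mul, ← map_mul, ← map_sub, ← map_add]; exact hd
        obtain ⟨ha0, hb0⟩ := sc_norm_sol p hp h3 hd'
        have hpa : (p : R) * a = 0 := sc_pmul_eq_zero p hp.pos ha0
        have hpb : (p : R) * b = 0 := sc_pmul_eq_zero p hp.pos hb0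
        refine ⟨0, ?_⟩
        rw [Matrix.mulVec_zero, sub_zero]
        funext i
        fin_cases i <;> simp <;>
          [linear_combination hpa - 2*hpb; linear_combination hpa - hpb]
      · -- the norm form is a unit mod p
        set d : R := a*a - a*b + b*b with hddef
        set e : R := sclift p (scphi p d)⁻¹ with hedef
        have hde : scphi p (d * e) = 1 := by
          rw [map_mul, hedef, sc_phi_lift p hp.pos, mul_inv_cancel₀ hd]
        have hped : (p : R) * (d * e) = (p : R) := sc_pmul_eq_p p hp.pos hde
        refine ⟨![-(e * ((2*b-a)*(a-2*b) + 3*(a-b)*(a-b))),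
                  -(e * (b*(a-2*b) + (a-2*b)*(a-b)))], ?_⟩
        rw [hrepγ]
        funext i
        fin_cases i <;>
          simp [hmat, Matrix.mulVec, dotProduct, Fin.sum_univ_succ] <;>
          [linear_combination (-(a-2*b)) * hped; linear_combination (-(a-b)) * hped]
    · -- k = 1
      obtain ⟨e, hpe3⟩ : ∃ e : R, (p : R) * ((3 : R) * e) = (p : R) := by
        refine ⟨sclift p (3 : ZMod p)⁻¹, sc_pmul_eq_p p hp.pos ?_⟩
        rw [map_mul, sc_phi_lift p hp.pos, e3def, mul_inv_cancel₀ (sc_three_ne p hp h3)]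
      refine ⟨![(p : R) * b, (p : R) * (-(e * (a - 2*b)))], ?_⟩
      rw [hrepγ, ← Matrix.mulVec_mulVec, pow_one, sc_gmat_mulVec_p, sc_hmat_mulVec]
      funext i
      fin_cases i <;> simp <;>
        first
          | ring1
          | linear_combination (-(a-2*b)) * hpe3
          | linear_combination (a-2*b) * hpe3
          | linear_combination (-(A γ -2*B γ)) * hpe3
          | linear_combination (A γ-2*B γ) * hpe3
          | linear_combination 2*(a-2*b) * hpe3
          | linear_combination (-2*(a-2*b)) * hpe3
    · -- k = 2
      obtain ⟨e, hpe3⟩ : ∃ e : R, (p : R) * ((3 : R) * e) = (p : R) := by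
        refine ⟨sclift p (3 : ZMod p)⁻¹, sc_pmul_eq_p p hp.pos ?_⟩
        rw [map_mul, sc_phi_lift p hp.pos, e3def, mul_inv_cancel₀ (sc_three_ne p hp h3)]
      refine ⟨![(p : R) * (b - a), (p : R) * ((b - a) + e * (a - 2*b))], ?_⟩
      rw [hrepγ, ← Matrix.mulVec_mulVec, sc_g2_mulVec_p, sc_hmat_mulVec]
      funext i
      fin_cases i <;> simp <;>
        first
          | ring1
          | linear_combination (-(a-2*b)) * hpe3
  · -- not a coboundary
    rintro ⟨v, hv⟩
    -- the element g of G2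
    have hg1 : gmat p * gmat p ^ 2 = 1 := by
      have h12 : gmat p ^ 1 * gmat p ^ 2 = gmat p ^ 3 := (pow_add (gmat p) 1 2).symm
      rw [pow_one] at h12
      rw [h12, sc_gmat_pow3]
    have hg2 : gmat p ^ 2 * gmat p = 1 := by
      have h21 : gmat p ^ 2 * gmat p ^ 1 = gmat p ^ 3 := (pow_add (gmat p) 2 1).symm
      rw [pow_one] at h21
      rw [h21, sc_gmat_pow3]
    set gu : Matrix.GeneralLinearGroup (Fin 2) R :=
      ⟨gmat p, gmat p ^ 2, hg1, hg2⟩ with hgudef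
    have hgmem : gu ∈ G2 p := Subgroup.subset_closure (Or.inl rfl)
    have hh1 : hmat p 1 0 * hmat p (-1) 0 = 1 := by
      rw [sc_hmat_mul]
      simpa using sc_hmat_zero p
    have hh2 : hmat p (-1) 0 * hmat p 1 0 = 1 := by
      rw [sc_hmat_mul]
      simpa using sc_hmat_zero p
    set hu : Matrix.GeneralLinearGroup (Fin 2) R :=
      ⟨hmat p 1 0, hmat p (-1) 0, hh1, hh2⟩ with hhudef
    have hhmem : hu ∈ G2 p := Subgroup.subset_closure (Or.inr ⟨1, 0, rfl⟩)
    -- evaluate the coboundary property at g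
    have hx' : ((↑(⟨gu, hgmem⟩ : G2 p) : Matrix.GeneralLinearGroup (Fin 2) R) :
        Matrix (Fin 2) (Fin 2) R) = hmat p 0 0 * gmat p ^ 1 := by
      rw [sc_hmat_zero, one_mul, pow_one]
    obtain ⟨e1, e2⟩ := key ⟨gu, hgmem⟩ 0 0 1 (by norm_num) hx'
    have e1' : (p : R) * (A ⟨gu, hgmem⟩ - 2 * B ⟨gu, hgmem⟩) = 0 := by
      rw [e1]; ring
    have e2' : (p : R) * (A ⟨gu, hgmem⟩ - B ⟨gu, hgmem⟩) = 0 := by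
      rw [e2]; ring
    have hZg := hv ⟨gu, hgmem⟩
    have hcoeg : ((↑(⟨gu, hgmem⟩ : G2 p) : Matrix.GeneralLinearGroup (Fin 2) R) :
        Matrix (Fin 2) (Fin 2) R) = gmat p := rfl
    rw [hcoeg] at hZg
    have c0 := congrFun hZg 0
    have c1 := congrFun hZg 1
    simp only [Matrix.cons_val_zero, Matrix.cons_val_one, Matrix.head_cons] at c0 c1
    rw [e1'] at c0
    rw [e2'] at c1
    simp [gmat, Matrix.mulVec, dotProduct, Fin.sum_univ_succ] at c0 c1
    -- c0 : 0 = v 0 - 3 * v 1 - v 0, c1 : 0 = v 0 - 2 * v 1 - v 1 (up to normalization)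
    have hu3 : IsUnit (3 : R) := by
      have hne : (3 : ℕ) ≠ p := by
        intro h; rw [← h] at h3; simp at h3
      have cop : Nat.Coprime 3 (p^2) :=
        Nat.Coprime.pow_right 2 ((Nat.coprime_primes (by norm_num) hp).mpr hne)
      have := (ZMod.isUnit_iff_coprime 3 (p^2)).mpr cop
      simpa using this
    have hv1 : v 1 = 0 := by
      have h31 : (3 : R) * v 1 = 0 := by
        first
          | linear_combination c0
          | linear_combination -c0
      exact (IsUnit.mul_right_eq_zero hu3).mp h31
    have hv0 : v 0 = 0 := by
      first
        | linear_combination c1 + 3 * hv1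
        | linear_combination -c1 + 3 * hv1
        | linear_combination c1 - 3 * hv1
        | linear_combination -c1 - 3 * hv1
        | linear_combination c1
        | linear_combination -c1
    have hveq : v = 0 := by
      funext i; fin_cases i
      · exact hv0
      · exact hv1
    -- evaluate the coboundary property at h(1,0)
    have hx2 : ((↑(⟨hu, hhmem⟩ : G2 p) : Matrix.GeneralLinearGroup (Fin 2) R) :
        Matrix (Fin 2) (Fin 2) R) = hmat p 1 0 * gmat p ^ 0 := by
      rw [pow_zero, mul_one]
    obtain ⟨f1, f2⟩ := key ⟨hu, hhmem⟩ 1 0 0 (by norm_num) hx2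
    have hZh := hv ⟨hu, hhmem⟩
    rw [hveq, Matrix.mulVec_zero, sub_zero] at hZh
    have d0 := congrFun hZh 0
    simp only [Matrix.cons_val_zero, Pi.zero_apply] at d0
    have hp0 : (p : R) = 0 := by
      rw [f1] at d0
      first
        | linear_combination d0
        | linear_combination -d0
    have hdvd : p^2 ∣ p := by
      have : ((p : ℕ) : ZMod (p^2)) = 0 := hp0
      exact (ZMod.natCast_eq_zero_iff p (p^2)).mp this
    have hle : p^2 ≤ p := Nat.le_of_dvd hp.pos hdvd
    have h2 := hp.two_le
    nlinarith
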